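/- Let ρ ∈ (0,1), δ ∈ (0, ρ/8], and suppose m ≥ 700·log(1/δ)/(z·ρ²). Then for every fixed threshold z₀ ∈ [3z/4, 3z/2]: (i) if E_{x∼D}[φ(x)] ≤ z/2 then P[avg > z₀] ≤ δ, and (ii) if E_{x∼D}[φ(x)] ≥ 2z then P[avg ≤ z₀] ≤ δ. (Correctness of the rThreshold algorithm, which outputs the bit b = 1{avg > z₀}.) -/

import Mathlib

open MeasureTheory

private lemma exp_convex_aux (t y : ℝ) (h0 : 0 ≤ y) (h1 : y ≤ 1) :
    Real.exp (t * y) ≤ 1 + y * (Real.exp t - 1) := by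
  have h := convexOn_exp.2 (Set.mem_univ t) (Set.mem_univ (0 : ℝ)) h0
    (by linarith : (0:ℝ) ≤ 1 - y) (by ring)
  simp only [smul_eq_mul, mul_zero, add_zero, Real.exp_zero, mul_one] at h
  calc Real.exp (t * y) = Real.exp (y * t) := by rw [mul_comm]
    _ ≤ y * Real.exp t + (1 - y) := h
    _ = 1 + y * (Real.exp t - 1) := by ring

private lemma mgf_one_le_aux {X : Type*} [MeasurableSpace X]
    (D : Measure X) [IsProbabilityMeasure D]
    (φ : X → ℝ) (hφm : Measurable φ) (hφ0 : ∀ x, 0 ≤ φ x) (hφ1 : ∀ x, φ x ≤ 1)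
    (t : ℝ) :
    ∫ x, Real.exp (t * φ x) ∂D ≤ Real.exp ((∫ x, φ x ∂D) * (Real.exp t - 1)) := by
  have hφint : Integrable φ D := by
    refine (integrable_const (1:ℝ)).mono' hφm.aestronglyMeasurable (ae_of_all _ fun x => ?_)
    rw [Real.norm_eq_abs, abs_of_nonneg (hφ0 x)]; exact hφ1 x
  have hint : Integrable (fun x => Real.exp (t * φ x)) D := by
    refine (integrable_const (Real.exp |t|)).mono'
      ((hφm.const_mul t).exp).aestronglyMeasurable (ae_of_all _ fun x => ?_)
    rw [Real.norm_eq_abs, abs_of_pos (Real.exp_pos _)]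
    exact Real.exp_le_exp.2 (by nlinarith [le_abs_self t, abs_nonneg t, hφ0 x, hφ1 x])
  calc ∫ x, Real.exp (t * φ x) ∂D
      ≤ ∫ x, (1 + φ x * (Real.exp t - 1)) ∂D := by
        refine integral_mono hint ((integrable_const 1).add (hφint.mul_const _))
          fun x => exp_convex_aux t (φ x) (hφ0 x) (hφ1 x)
    _ = 1 + (∫ x, φ x ∂D) * (Real.exp t - 1) := by
        rw [integral_add (integrable_const 1) (hφint.mul_const _), integral_const,
          integral_mul_const]
        simp
    _ ≤ Real.exp ((∫ x, φ x ∂D) * (Real.exp t - 1)) := by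
        linarith [Real.add_one_le_exp ((∫ x, φ x ∂D) * (Real.exp t - 1))]

/-- Correctness of the `rThreshold` algorithm: with `m ≥ 700·log(1/δ)/(z·ρ²)` samples and
any fixed threshold `z₀ ∈ [3z/4, 3z/2]`, (i) if `E[φ] ≤ z/2` then `P[avg > z₀] ≤ δ`, and
(ii) if `E[φ] ≥ 2z` then `P[avg ≤ z₀] ≤ δ`, where `avg = (1/m)·∑_{i=1}^m φ(X_i)` with
`X₁,…,X_m` i.i.d. from `D`. -/
theorem rThreshold_correct {X : Type*} [MeasurableSpace X]
    (D : Measure X) [IsProbabilityMeasure D]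
    (φ : X → ℝ) (hφm : Measurable φ) (hφ0 : ∀ x, 0 ≤ φ x) (hφ1 : ∀ x, φ x ≤ 1)
    (z : ℝ) (hz : z ∈ Set.Ioo (0 : ℝ) 1) (m : ℕ) (hm : 0 < m)
    (ρ : ℝ) (hρ : ρ ∈ Set.Ioo (0 : ℝ) 1) (δ : ℝ) (hδ : δ ∈ Set.Ioc (0 : ℝ) (ρ / 8))
    (hsamp : 700 * Real.log (1 / δ) / (z * ρ ^ 2) ≤ (m : ℝ))
    (z₀ : ℝ) (hz₀ : z₀ ∈ Set.Icc (3 * z / 4) (3 * z / 2)) :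
    ((∫ x, φ x ∂D ≤ z / 2 →
        (Measure.pi fun _ : Fin m => D)
          {s | z₀ < (m : ℝ)⁻¹ * ∑ i, φ (s i)} ≤ ENNReal.ofReal δ) ∧
      (2 * z ≤ ∫ x, φ x ∂D →
        (Measure.pi fun _ : Fin m => D)
          {s | (m : ℝ)⁻¹ * ∑ i, φ (s i) ≤ z₀} ≤ ENNReal.ofReal δ)) := by
  letI : MeasureSpace X := ⟨D⟩
  set μ : Measure (Fin m → X) := Measure.pi fun _ : Fin m => D with hμdef
  have hμvol : (volume : Measure (Fin m → X)) = μ := by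
    rw [hμdef]; exact MeasureTheory.volume_pi
  set S : (Fin m → X) → ℝ := fun s => ∑ i, φ (s i) with hSdef
  have hSm : Measurable S := Finset.measurable_sum _ fun i _ => hφm.comp (measurable_pi_apply i)
  have hm0 : (0:ℝ) < (m:ℝ) := Nat.cast_pos.2 hm
  -- integrability of exp(t * S)
  have hintS : ∀ t : ℝ, Integrable (fun s => Real.exp (t * S s)) μ := by
    intro t
    refine (integrable_const (Real.exp (|t| * m))).mono'
      ((hSm.const_mul t).exp).aestronglyMeasurable (ae_of_all _ fun s => ?_)
    rw [Real.norm_eq_abs, abs_of_pos (Real.exp_pos _)]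
    refine Real.exp_le_exp.2 ?_
    have h1 : S s ≤ (m : ℝ) := by
      calc S s ≤ ∑ _i : Fin m, (1:ℝ) := Finset.sum_le_sum fun i _ => hφ1 _
        _ = (m:ℝ) := by simp
    have h2 : 0 ≤ S s := Finset.sum_nonneg fun i _ => hφ0 _
    nlinarith [le_abs_self t, abs_nonneg t]
  -- product formula for the mgf
  have hprod : ∀ t : ℝ, ∫ s, Real.exp (t * S s) ∂μ = (∫ x, Real.exp (t * φ x) ∂D) ^ m := by
    intro t
    have hDvol : (volume : Measure X) = D := rfl
    have h := MeasureTheory.integral_fintype_prod_eq_pow (ι := Fin m)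
      (fun x : X => Real.exp (t * φ x)) (μ := D)
    simp only [Fintype.card_fin] at h
    rw [← h]
    congr 1
    ext s
    rw [hSdef]
    simp only
    rw [Finset.mul_sum, Real.exp_sum]
  have hL0 : 0 ≤ Real.log (1 / δ) := by
    apply Real.log_nonneg
    rw [le_div_iff₀ hδ.1]
    nlinarith [hρ.2, hδ.2]
  have hmz : 700 * Real.log (1 / δ) ≤ (m : ℝ) * z := by
    have hpos : 0 < z * ρ ^ 2 := mul_pos hz.1 (pow_pos hρ.1 2)
    have h1 : 700 * Real.log (1 / δ) ≤ (m : ℝ) * (z * ρ ^ 2) := (div_le_iff₀ hpos).1 hsamp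
    have h2 : (m : ℝ) * z * ρ ^ 2 ≤ (m : ℝ) * z * 1 :=
      mul_le_mul_of_nonneg_left (by nlinarith [hρ.1, hρ.2]) (mul_nonneg hm0.le hz.1.le)
    nlinarith
  have hlogδ : Real.log δ = -Real.log (1 / δ) := by
    rw [one_div, Real.log_inv, neg_neg]
  -- exp(1/4) and exp(-1/4) rational bounds
  have he1 : Real.exp (1/4 : ℝ) - 1 ≤ 1/3 := by
    have h := Real.add_one_le_exp (-(1/4) : ℝ)
    rw [Real.exp_neg] at h
    have h3 : (0:ℝ) < Real.exp (1/4:ℝ) := Real.exp_pos _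
    nlinarith [mul_inv_cancel₀ (ne_of_gt h3)]
  have he1' : 0 ≤ Real.exp (1/4 : ℝ) - 1 := by
    have := Real.one_le_exp (by norm_num : (0:ℝ) ≤ 1/4); linarith
  have he2 : Real.exp (-(1/4) : ℝ) - 1 ≤ -(1/5) := by
    have h := Real.add_one_le_exp (1/4 : ℝ)
    have h3 : (0:ℝ) < Real.exp (-(1/4):ℝ) := Real.exp_pos _
    have h4 : Real.exp (-(1/4) : ℝ) ≤ 4/5 := by
      have hc : Real.exp (1/4:ℝ) * Real.exp (-(1/4):ℝ) = 1 := by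
        rw [← Real.exp_add]; norm_num
      nlinarith
    linarith
  have hexpS0 : ∀ t : ℝ, 0 ≤ ∫ x, Real.exp (t * φ x) ∂D :=
    fun t => integral_nonneg fun x => (Real.exp_pos _).le
  have hmgf := mgf_one_le_aux D φ hφm hφ0 hφ1
  set Eφ : ℝ := ∫ x, φ x ∂D with hEφ
  constructor
  · -- upper tail
    intro hE
    have hsub : {s : Fin m → X | z₀ < (m : ℝ)⁻¹ * ∑ i, φ (s i)}
        ⊆ {s | (m:ℝ) * z₀ ≤ S s} := by
      intro s hs
      simp only [Set.mem_setOf_eq] at hs ⊢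
      have h1 : z₀ * m < S s := by
        rw [inv_mul_eq_div, lt_div_iff₀ hm0] at hs
        exact hs
      linarith
    refine le_trans (measure_mono hsub) ?_
    rw [← ENNReal.ofReal_toReal (measure_ne_top μ _)]
    refine ENNReal.ofReal_le_ofReal ?_
    have hcher := ProbabilityTheory.measure_ge_le_exp_mul_mgf (μ := μ) (X := S)
      ((m:ℝ) * z₀) (by norm_num : (0:ℝ) ≤ 1/4) (hintS (1/4))
    refine hcher.trans ?_
    rw [ProbabilityTheory.mgf, hprod]
    have hpow : (∫ x, Real.exp ((1/4) * φ x) ∂D) ^ m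
        ≤ Real.exp (Eφ * (Real.exp (1/4:ℝ) - 1)) ^ m :=
      pow_le_pow_left₀ (hexpS0 _) (hmgf (1/4)) m
    calc Real.exp (-(1/4) * ((m:ℝ) * z₀)) * (∫ x, Real.exp ((1/4) * φ x) ∂D) ^ m
        ≤ Real.exp (-(1/4) * ((m:ℝ) * z₀)) * Real.exp (Eφ * (Real.exp (1/4:ℝ) - 1)) ^ m := by
          exact mul_le_mul_of_nonneg_left hpow (Real.exp_pos _).le
      _ = Real.exp (-(1/4) * ((m:ℝ) * z₀) + (m:ℝ) * (Eφ * (Real.exp (1/4:ℝ) - 1))) := by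
          rw [← Real.exp_nat_mul, ← Real.exp_add]
      _ ≤ δ := by
          rw [← Real.exp_log hδ.1]
          refine Real.exp_le_exp.2 ?_
          rw [hlogδ]
          have h1 : Eφ * (Real.exp (1/4:ℝ) - 1) ≤ (z/2) * (1/3) := by
            calc Eφ * (Real.exp (1/4:ℝ) - 1) ≤ (z/2) * (Real.exp (1/4:ℝ) - 1) :=
                  mul_le_mul_of_nonneg_right hE he1'
              _ ≤ (z/2) * (1/3) := mul_le_mul_of_nonneg_left he1 (by linarith [hz.1])
          have h2 : (m:ℝ) * (3 * z / 4) ≤ (m:ℝ) * z₀ :=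
            mul_le_mul_of_nonneg_left hz₀.1 hm0.le
          have h3 : (m:ℝ) * (Eφ * (Real.exp (1/4:ℝ) - 1)) ≤ (m:ℝ) * ((z/2) * (1/3)) :=
            mul_le_mul_of_nonneg_left h1 hm0.le
          nlinarith
  · -- lower tail
    intro hE
    have hsub : {s : Fin m → X | (m : ℝ)⁻¹ * ∑ i, φ (s i) ≤ z₀}
        ⊆ {s | S s ≤ (m:ℝ) * z₀} := by
      intro s hs
      simp only [Set.mem_setOf_eq] at hs ⊢
      rw [inv_mul_eq_div, div_le_iff₀ hm0] at hs
      linarith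
    refine le_trans (measure_mono hsub) ?_
    rw [← ENNReal.ofReal_toReal (measure_ne_top μ _)]
    refine ENNReal.ofReal_le_ofReal ?_
    have hcher := ProbabilityTheory.measure_le_le_exp_mul_mgf (μ := μ) (X := S)
      ((m:ℝ) * z₀) (by norm_num : (-(1/4):ℝ) ≤ 0) (hintS (-(1/4)))
    refine hcher.trans ?_
    rw [ProbabilityTheory.mgf, hprod]
    have hpow : (∫ x, Real.exp ((-(1/4)) * φ x) ∂D) ^ m
        ≤ Real.exp (Eφ * (Real.exp (-(1/4):ℝ) - 1)) ^ m :=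
      pow_le_pow_left₀ (hexpS0 _) (hmgf (-(1/4))) m
    calc Real.exp (-(-(1/4)) * ((m:ℝ) * z₀)) * (∫ x, Real.exp ((-(1/4)) * φ x) ∂D) ^ m
        ≤ Real.exp (-(-(1/4)) * ((m:ℝ) * z₀)) *
            Real.exp (Eφ * (Real.exp (-(1/4):ℝ) - 1)) ^ m := by
          exact mul_le_mul_of_nonneg_left hpow (Real.exp_pos _).le
      _ = Real.exp (-(-(1/4)) * ((m:ℝ) * z₀) + (m:ℝ) * (Eφ * (Real.exp (-(1/4):ℝ) - 1))) := by
          rw [← Real.exp_nat_mul, ← Real.exp_add]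
      _ ≤ δ := by
          rw [← Real.exp_log hδ.1]
          refine Real.exp_le_exp.2 ?_
          rw [hlogδ]
          have hc : Real.exp (-(1/4):ℝ) - 1 ≤ -(1/5) := he2
          have h1 : Eφ * (Real.exp (-(1/4):ℝ) - 1) ≤ (2*z) * (-(1/5)) := by
            calc Eφ * (Real.exp (-(1/4):ℝ) - 1) ≤ (2*z) * (Real.exp (-(1/4):ℝ) - 1) := by
                  apply mul_le_mul_of_nonpos_right hE (by linarith)
              _ ≤ (2*z) * (-(1/5)) := mul_le_mul_of_nonneg_left hc (by linarith [hz.1])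
          have h2 : (m:ℝ) * z₀ ≤ (m:ℝ) * (3 * z / 2) :=
            mul_le_mul_of_nonneg_left hz₀.2 hm0.le
          have h3 : (m:ℝ) * (Eφ * (Real.exp (-(1/4):ℝ) - 1)) ≤ (m:ℝ) * ((2*z) * (-(1/5))) :=
            mul_le_mul_of_nonneg_left h1 hm0.le
          nlinarith
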